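/- Let A be a *-algebra over ℚ with additive basis {[g] : g ∈ G} for a locally finite hypergroupoid G, multiplication [g][g'] = Σ_{a∈g∘g'} μ(a;g,g')[a] and involution [g]* = χ(g)[g*] with χ(g) = |g|_l/|g|_r. Define the weight η on basis elements by η([q]) = 1 if q is a unit and 0 otherwise, and the one-parameter family σ_t([g]) = χ(g)^{it}[g]. Then η satisfies the algebraic KMS₁ identity: η([q]·σ_i([q'])) = η([q']·[q]) for all arrows q, q', where σ_i([q']) = χ(q')^{-1}[q']. -/
import Mathlib

/-- The convolution product on the hypergroupoid algebra `ℚ[G]`: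
`[g]·[g'] = Σ_{a ∈ g∘g'} μ(a;g,g')·[a]`, extended bilinearly. -/
noncomputable def mulA {G : Type*} (cmp : G → G → Finset G) (μ : G → G → G → ℕ)
    (x y : G →₀ ℚ) : G →₀ ℚ :=
  x.sum fun g c => y.sum fun g' c' => ∑ a ∈ cmp g g', Finsupp.single a (c * c' * (μ a g g' : ℚ))

/-- The weight `η`: sum of the coefficients of the unit arrows. -/
noncomputable def etaW {G : Type*} (E : Set G) [DecidablePred (· ∈ E)] (x : G →₀ ℚ) : ℚ :=
  ∑ e ∈ x.support.filter (· ∈ E), x e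

lemma etaW_sum_single {G : Type*} (E : Set G) [DecidablePred (· ∈ E)]
    (s : Finset G) (f : G → ℚ) :
    etaW E (∑ a ∈ s, Finsupp.single a (f a)) = ∑ e ∈ s.filter (· ∈ E), f e := by
  classical
  set x : G →₀ ℚ := ∑ a ∈ s, Finsupp.single a (f a) with hx
  have hcoeff : ∀ e, x e = if e ∈ s then f e else 0 := by
    intro e
    rw [hx, Finsupp.finset_sum_apply]
    simp only [Finsupp.single_apply]
    exact Finset.sum_ite_eq' s e f
  have hsub : x.support.filter (· ∈ E) ⊆ s.filter (· ∈ E) := by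
    intro e he
    simp only [Finset.mem_filter, Finsupp.mem_support_iff] at he ⊢
    refine ⟨?_, he.2⟩
    by_contra h
    exact he.1 (by rw [hcoeff e, if_neg h])
  rw [etaW, Finset.sum_subset hsub]
  · refine Finset.sum_congr rfl fun e he => ?_
    rw [hcoeff e, if_pos (Finset.mem_filter.mp he).1]
  · intro e _ he
    by_contra h
    exact he (Finsupp.mem_support_iff.mpr h |> fun hh => Finset.mem_filter.mpr ⟨hh, by
      have := Finset.mem_filter.mp ‹e ∈ s.filter (· ∈ E)›; exact this.2⟩)

lemma mulA_single {G : Type*} (cmp : G → G → Finset G) (μ : G → G → G → ℕ)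
    (q q' : G) (c c' : ℚ) :
    mulA cmp μ (Finsupp.single q c) (Finsupp.single q' c') =
      ∑ a ∈ cmp q q', Finsupp.single a (c * c' * (μ a q q' : ℚ)) := by
  rw [mulA, Finsupp.sum_single_index, Finsupp.sum_single_index]
  · simp
  · simp

/-- For a locally finite hypergroupoid, the weight `η` (with `η([q]) = 1` iff `q` is a
unit) satisfies the algebraic KMS₁ identity `η([q]·σ_i([q'])) = η([q']·[q])`, where
`σ_i([q']) = χ(q')⁻¹·[q']` and `χ(g) = |g|_l / |g|_r`. -/
theorem stmt17 {G : Type*} (star : G → G) (cmp : G → G → Finset G) (μ : G → G → G → ℕ)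
    (l r : G → ℕ) (E : Set G) [DecidablePred (· ∈ E)]
    (hl : ∀ g, 0 < l g) (hr : ∀ g, 0 < r g)
    (hss : ∀ g, star (star g) = g)
    (hls : ∀ g, l (star g) = r g)
    (hunit : ∀ q q' e, e ∈ E → e ∈ cmp q q' → q' = star q)
    (hμunit : ∀ q e, e ∈ E → e ∈ cmp q (star q) → μ e q (star q) = r q)
    (hone : ∀ q, ∃! e, e ∈ E ∧ e ∈ cmp q (star q))
    (χ : G → ℚ) (hχ : ∀ g, χ g = (l g : ℚ) / (r g : ℚ)) :
    ∀ q q' : G,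
      etaW E (mulA cmp μ (Finsupp.single q 1) ((χ q')⁻¹ • Finsupp.single q' 1)) =
        etaW E (mulA cmp μ (Finsupp.single q' 1) (Finsupp.single q 1)) := by
  classical
  intro q q'
  rw [Finsupp.smul_single, smul_eq_mul, mul_one, mulA_single, mulA_single,
    etaW_sum_single, etaW_sum_single]
  by_cases hq : q' = star q
  · subst hq
    obtain ⟨e, ⟨heE, hec⟩, heu⟩ := hone q
    obtain ⟨e', ⟨he'E, he'c⟩, he'u⟩ := hone (star q)
    have h1 : (cmp q (star q)).filter (· ∈ E) = {e} := by
      ext a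
      simp only [Finset.mem_filter, Finset.mem_singleton]
      exact ⟨fun h => heu a ⟨h.2, h.1⟩, fun h => h ▸ ⟨hec, heE⟩⟩
    have h2 : (cmp (star q) q).filter (· ∈ E) = {e'} := by
      rw [show cmp (star q) q = cmp (star q) (star (star q)) by rw [hss]]
      ext a
      simp only [Finset.mem_filter, Finset.mem_singleton]
      exact ⟨fun h => he'u a ⟨h.2, h.1⟩, fun h => h ▸ ⟨he'c, he'E⟩⟩
    rw [h1, h2, Finset.sum_singleton, Finset.sum_singleton]
    have hμ1 : μ e q (star q) = r q := hμunit q e heE hec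
    have hμ2 : μ e' (star q) q = r (star q) := by
      have := hμunit (star q) e' he'E he'c
      rwa [hss] at this
    rw [hμ1, hμ2, hχ]
    have h3 : l (star q) = r q := hls q
    have hrq : (r q : ℚ) ≠ 0 := Nat.cast_ne_zero.mpr (hr q).ne'
    have hrsq : (r (star q) : ℚ) ≠ 0 := Nat.cast_ne_zero.mpr (hr (star q)).ne'
    rw [h3]
    field_simp
  · have h1 : (cmp q q').filter (· ∈ E) = ∅ := by
      ext a
      simp only [Finset.mem_filter, Finset.notMem_empty, iff_false, not_and]
      intro ha haE
      exact hq (hunit q q' a haE ha)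
    have h2 : (cmp q' q).filter (· ∈ E) = ∅ := by
      ext a
      simp only [Finset.mem_filter, Finset.notMem_empty, iff_false, not_and]
      intro ha haE
      have hq2 : q = star q' := hunit q' q a haE ha
      exact hq (by rw [hq2, hss])
    rw [h1, h2, Finset.sum_empty, Finset.sum_empty]
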